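/- Let X be a real Banach space, let K : X×X → ℝ be a kernel satisfying conditions (1)–(4) which is moreover uniformly separating on bounded sets, and let f : X → ℝ be bounded below and uniformly continuous on every bounded subset of X. Then I_{K,n}(I_{K,n} f) → f uniformly on every bounded subset of X as n → ∞. -/

import Mathlib

open scoped BigOperators

/-- The inf-convolution `I_{K,n} f (x) = inf_y ( f(y) + n K(x,y) )` for real-valued `f`. -/
noncomputable def infConvKR {X : Type*} [NormedAddCommGroup X]
    (K : X → X → ℝ) (f : X → ℝ) (n : ℕ) (x : X) : ℝ :=
  ⨅ y, f y + (n : ℝ) * K x y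

/-- A function uniformly continuous on bounded sets of a normed space is bounded above
on balls. -/
lemma aux_bddAbove {X : Type*} [NormedAddCommGroup X] [NormedSpace ℝ X]
    (f : X → ℝ) (hucb : ∀ s : Set X, Bornology.IsBounded s → UniformContinuousOn f s)
    (ρ : ℝ) : ∃ F : ℝ, ∀ x : X, ‖x‖ ≤ ρ → f x ≤ F := by
  set r := max ρ 0 with hrdef
  have hr0 : 0 ≤ r := le_max_right _ _
  have hb : Bornology.IsBounded (Metric.closedBall (0 : X) r) := Metric.isBounded_closedBall
  have huc := hucb _ hb
  rw [Metric.uniformContinuousOn_iff] at huc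
  obtain ⟨δ, hδ, hδ'⟩ := huc 1 one_pos
  obtain ⟨N, hN⟩ := exists_nat_gt (r / δ)
  have hN0 : 0 < (N : ℝ) := lt_of_le_of_lt (div_nonneg hr0 hδ.le) hN
  have hmem : ∀ (j : ℕ) (x : X), j ≤ N → ‖x‖ ≤ r →
      ((j : ℝ) / (N : ℝ)) • x ∈ Metric.closedBall (0 : X) r := by
    intro j x hj hx
    rw [Metric.mem_closedBall, dist_zero_right, norm_smul, Real.norm_eq_abs,
      abs_of_nonneg (by positivity)]
    calc (j : ℝ) / (N : ℝ) * ‖x‖ ≤ 1 * r := by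
          apply mul_le_mul _ hx (norm_nonneg _) zero_le_one
          rw [div_le_one hN0]; exact_mod_cast hj
      _ = r := one_mul r
  have key : ∀ k : ℕ, k ≤ N → ∀ x : X, ‖x‖ ≤ r →
      f (((k : ℝ) / (N : ℝ)) • x) ≤ f 0 + k := by
    intro k
    induction k with
    | zero => intro _ x _; simp
    | succ k ih =>
      intro hk x hx
      have hk' : k ≤ N := Nat.le_of_succ_le hk
      have h1 : f (((k : ℝ) / (N : ℝ)) • x) ≤ f 0 + k := ih hk' x hx
      have hd : dist ((((k : ℝ) + 1) / (N : ℝ)) • x) (((k : ℝ) / (N : ℝ)) • x) < δ := by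
        rw [dist_eq_norm, ← sub_smul]
        have heq : ((k : ℝ) + 1) / (N : ℝ) - (k : ℝ) / (N : ℝ) = 1 / (N : ℝ) := by
          field_simp
          ring
        rw [heq, norm_smul, Real.norm_eq_abs, abs_of_nonneg (by positivity)]
        have h2 : r < δ * N := by
          rw [div_lt_iff₀ hδ] at hN; linarith
        calc 1 / (N : ℝ) * ‖x‖ ≤ 1 / (N : ℝ) * r :=
              mul_le_mul_of_nonneg_left hx (by positivity)
          _ < δ := by
              rw [div_mul_eq_mul_div, one_mul, div_lt_iff₀ hN0]; linarith
      have hmem1 : (((k : ℝ) + 1) / (N : ℝ)) • x ∈ Metric.closedBall (0 : X) r := by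
        have := hmem (k + 1) x hk hx
        push_cast at this
        exact this
      have hmem2 : ((k : ℝ) / (N : ℝ)) • x ∈ Metric.closedBall (0 : X) r :=
        hmem k x hk' hx
      have hdf := hδ' _ hmem1 _ hmem2 hd
      rw [Real.dist_eq, abs_lt] at hdf
      push_cast
      linarith
  refine ⟨f 0 + N, fun x hx => ?_⟩
  have hx' : ‖x‖ ≤ r := le_trans hx (le_max_left _ _)
  have h := key N le_rfl x hx'
  rwa [div_self (ne_of_gt hN0), one_smul] at h

/-- Lower bound for the single inf-convolution: uniformly on balls,
`f x - ε ≤ I_{K,n} f x` for large `n`. -/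
lemma aux_lower {X : Type*} [NormedAddCommGroup X] [NormedSpace ℝ X]
    (K : X → X → ℝ)
    (hK0 : ∀ x y : X, 0 ≤ K x y)
    (hKsep : ∀ r δ : ℝ, 0 < r → 0 < δ → ∃ C : ℝ, 0 < C ∧
      ∀ x y : X, ‖x‖ ≤ r → δ ≤ ‖x - y‖ → C ≤ K x y)
    (f : X → ℝ) (m : ℝ) (hm : ∀ x, m ≤ f x)
    (hucb : ∀ s : Set X, Bornology.IsBounded s → UniformContinuousOn f s)
    (ρ ε : ℝ) (hρ : 0 < ρ) (hε : 0 < ε) :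
    ∃ N : ℕ, ∀ n : ℕ, N ≤ n → ∀ x : X, ‖x‖ ≤ ρ → f x - ε ≤ infConvKR K f n x := by
  obtain ⟨F, hF⟩ := aux_bddAbove f hucb ρ
  have hb : Bornology.IsBounded (Metric.closedBall (0 : X) (ρ + 1)) :=
    Metric.isBounded_closedBall
  have huc := hucb _ hb
  rw [Metric.uniformContinuousOn_iff] at huc
  obtain ⟨δ, hδ, hδ'⟩ := huc ε hε
  set δ' := min δ 1 with hδ'def
  have hδ'0 : 0 < δ' := lt_min hδ one_pos
  obtain ⟨C, hC, hCsep⟩ := hKsep ρ δ' hρ hδ'0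
  obtain ⟨N, hN⟩ := exists_nat_gt ((F - m) / C)
  refine ⟨N, fun n hn x hx => ?_⟩
  have hNC : F - m < N * C := by rwa [div_lt_iff₀ hC] at hN
  have hnC : (N : ℝ) * C ≤ n * C :=
    mul_le_mul_of_nonneg_right (by exact_mod_cast hn) hC.le
  unfold infConvKR
  apply le_ciInf
  intro y
  by_cases hcase : ‖x - y‖ < δ'
  · have hxmem : x ∈ Metric.closedBall (0 : X) (ρ + 1) := by
      rw [Metric.mem_closedBall, dist_zero_right]; linarith
    have hymem : y ∈ Metric.closedBall (0 : X) (ρ + 1) := by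
      rw [Metric.mem_closedBall, dist_zero_right]
      have : ‖y‖ ≤ ‖x‖ + ‖x - y‖ := by
        calc ‖y‖ = ‖x - (x - y)‖ := by rw [sub_sub_cancel]
          _ ≤ ‖x‖ + ‖x - y‖ := norm_sub_le _ _
      have h1 : ‖x - y‖ ≤ 1 := le_of_lt (lt_of_lt_of_le hcase (min_le_right _ _))
      linarith
    have hd : dist x y < δ := by
      rw [dist_eq_norm]
      exact lt_of_lt_of_le hcase (min_le_left _ _)
    have hdf := hδ' x hxmem y hymem hd
    rw [Real.dist_eq, abs_lt] at hdf
    have hK : 0 ≤ (n : ℝ) * K x y := mul_nonneg (Nat.cast_nonneg n) (hK0 x y)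
    linarith
  · push_neg at hcase
    have hKC := hCsep x y hx hcase
    have : (n : ℝ) * C ≤ (n : ℝ) * K x y :=
      mul_le_mul_of_nonneg_left hKC (Nat.cast_nonneg n)
    have hfx : f x ≤ F := hF x hx
    have hfy : m ≤ f y := hm y
    nlinarith

theorem stmt_9 {X : Type*} [NormedAddCommGroup X] [NormedSpace ℝ X] [CompleteSpace X]
    (K : X → X → ℝ)
    (hK1 : (∀ x y : X, 0 ≤ K x y) ∧ ∀ x : X, K x x = 0)
    (hK2 : ∀ x y : X, K x y = K y x)
    (hK3 : ∀ r M : ℝ, 0 < r → 0 < M → ∃ R : ℝ, ∀ x y : X, ‖x‖ ≤ r → R ≤ ‖y‖ → M ≤ K x y)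
    (hK4 : ∀ s : Set (X × X), Bornology.IsBounded s →
      UniformContinuousOn (fun q : X × X => K q.1 q.2) s)
    (hKsep : ∀ r δ : ℝ, 0 < r → 0 < δ → ∃ C : ℝ, 0 < C ∧
      ∀ x y : X, ‖x‖ ≤ r → δ ≤ ‖x - y‖ → C ≤ K x y)
    (f : X → ℝ)
    (hbdd : ∃ m : ℝ, ∀ x, m ≤ f x)
    (hucb : ∀ s : Set X, Bornology.IsBounded s → UniformContinuousOn f s) :
    ∀ s : Set X, Bornology.IsBounded s →
      TendstoUniformlyOn
        (fun (n : ℕ) (x : X) => infConvKR K (fun y => infConvKR K f n y) n x)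
        f Filter.atTop s := by
  obtain ⟨m, hm⟩ := hbdd
  have hK0 := hK1.1
  have hKdiag := hK1.2
  -- basic facts about the single convolution g n := infConvKR K f n
  have hbdd1 : ∀ (n : ℕ) (x : X), BddBelow (Set.range fun y => f y + (n : ℝ) * K x y) := by
    intro n x
    refine ⟨m, fun z hz => ?_⟩
    obtain ⟨y, rfl⟩ := hz
    dsimp only
    have : 0 ≤ (n : ℝ) * K x y := mul_nonneg (Nat.cast_nonneg n) (hK0 x y)
    linarith [hm y]
  have hg_ge_m : ∀ (n : ℕ) (y : X), m ≤ infConvKR K f n y := by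
    intro n y
    unfold infConvKR
    apply le_ciInf
    intro z
    have : 0 ≤ (n : ℝ) * K y z := mul_nonneg (Nat.cast_nonneg n) (hK0 y z)
    linarith [hm z]
  have hg_le_f : ∀ (n : ℕ) (x : X), infConvKR K f n x ≤ f x := by
    intro n x
    have h := ciInf_le (hbdd1 n x) x
    simpa [hKdiag x, infConvKR] using h
  have hbdd2 : ∀ (n : ℕ) (x : X),
      BddBelow (Set.range fun y => infConvKR K f n y + (n : ℝ) * K x y) := by
    intro n x
    refine ⟨m, fun z hz => ?_⟩
    obtain ⟨y, rfl⟩ := hz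
    dsimp only
    have : 0 ≤ (n : ℝ) * K x y := mul_nonneg (Nat.cast_nonneg n) (hK0 x y)
    linarith [hg_ge_m n y]
  have hT_le : ∀ (n : ℕ) (x : X),
      infConvKR K (fun y => infConvKR K f n y) n x ≤ f x := by
    intro n x
    have h := ciInf_le (hbdd2 n x) x
    unfold infConvKR at h ⊢
    calc (⨅ y, (⨅ z, f z + (n : ℝ) * K y z) + (n : ℝ) * K x y)
        ≤ (⨅ z, f z + (n : ℝ) * K x z) + (n : ℝ) * K x x := h
      _ = (⨅ z, f z + (n : ℝ) * K x z) := by rw [hKdiag x]; ring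
      _ ≤ f x := hg_le_f n x
  intro s hs
  rw [Metric.tendstoUniformlyOn_iff]
  intro ε hε
  obtain ⟨r, hr⟩ := hs.subset_closedBall 0
  set ρ := max r 1 with hρdef
  have hρ : (0 : ℝ) < ρ := lt_of_lt_of_le one_pos (le_max_right _ _)
  have hsub : ∀ x ∈ s, ‖x‖ ≤ ρ := by
    intro x hx
    have := hr hx
    rw [Metric.mem_closedBall, dist_zero_right] at this
    exact le_trans this (le_max_left _ _)
  -- bound on f over the ball of radius ρ
  obtain ⟨F, hF⟩ := aux_bddAbove f hucb ρ
  -- uniform continuity of f on the ball of radius ρ + 1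
  have hb : Bornology.IsBounded (Metric.closedBall (0 : X) (ρ + 1)) :=
    Metric.isBounded_closedBall
  have huc := hucb _ hb
  rw [Metric.uniformContinuousOn_iff] at huc
  obtain ⟨δ, hδ, hδ'⟩ := huc (ε / 3) (by linarith)
  set δ' := min δ 1 with hδ'def
  have hδ'0 : 0 < δ' := lt_min hδ one_pos
  -- separation constant
  obtain ⟨C, hC, hCsep⟩ := hKsep ρ δ' hρ hδ'0
  obtain ⟨N2, hN2⟩ := exists_nat_gt ((F - m) / C)
  -- lower bound for the inner convolution on the ball of radius ρ + 1
  obtain ⟨N1, hN1⟩ := aux_lower K hK0 hKsep f m hm hucb (ρ + 1) (ε / 3)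
    (by linarith) (by linarith)
  rw [Filter.eventually_atTop]
  refine ⟨max N1 N2, fun n hn x hx => ?_⟩
  have hn1 : N1 ≤ n := le_trans (le_max_left _ _) hn
  have hn2 : N2 ≤ n := le_trans (le_max_right _ _) hn
  have hxρ : ‖x‖ ≤ ρ := hsub x hx
  have hfxF : f x ≤ F := hF x hxρ
  -- lower bound for the double convolution
  have hlow : f x - 2 * (ε / 3) ≤ infConvKR K (fun y => infConvKR K f n y) n x := by
    show f x - 2 * (ε / 3) ≤ ⨅ y, infConvKR K f n y + (n : ℝ) * K x y
    apply le_ciInf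
    intro y
    by_cases hcase : ‖x - y‖ < δ'
    · have hyρ : ‖y‖ ≤ ρ + 1 := by
        have h1 : ‖y‖ ≤ ‖x‖ + ‖x - y‖ := by
          calc ‖y‖ = ‖x - (x - y)‖ := by rw [sub_sub_cancel]
            _ ≤ ‖x‖ + ‖x - y‖ := norm_sub_le _ _
        have h2 : ‖x - y‖ ≤ 1 := le_of_lt (lt_of_lt_of_le hcase (min_le_right _ _))
        linarith
      have hxmem : x ∈ Metric.closedBall (0 : X) (ρ + 1) := by
        rw [Metric.mem_closedBall, dist_zero_right]; linarith
      have hymem : y ∈ Metric.closedBall (0 : X) (ρ + 1) := by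
        rw [Metric.mem_closedBall, dist_zero_right]; exact hyρ
      have hd : dist x y < δ := by
        rw [dist_eq_norm]
        exact lt_of_lt_of_le hcase (min_le_left _ _)
      have hdf := hδ' x hxmem y hymem hd
      rw [Real.dist_eq, abs_lt] at hdf
      have hg := hN1 n hn1 y hyρ
      have hK : 0 ≤ (n : ℝ) * K x y := mul_nonneg (Nat.cast_nonneg n) (hK0 x y)
      linarith
    · push_neg at hcase
      have hKC := hCsep x y hxρ hcase
      have h1 : (n : ℝ) * C ≤ (n : ℝ) * K x y :=
        mul_le_mul_of_nonneg_left hKC (Nat.cast_nonneg n)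
      have h2 : (N2 : ℝ) * C ≤ (n : ℝ) * C :=
        mul_le_mul_of_nonneg_right (by exact_mod_cast hn2) hC.le
      have h3 : F - m < (N2 : ℝ) * C := by rwa [div_lt_iff₀ hC] at hN2
      have h4 := hg_ge_m n y
      linarith
  have hup := hT_le n x
  rw [Real.dist_eq, abs_lt]
  constructor <;> linarith
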